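/- Let {U_i}_{i=1}^{d²} be a unitary orthonormal basis (Tr(U_i†U_j)=d·δ_{ij}), and define W_{ij} = (1/d²)(U_iU_j ⊗ |0⟩⟨0| + U_jU_i ⊗ |1⟩⟨1|). Then for any density matrix ρ and control state ρ_c = |ψ_c⟩⟨ψ_c| with |ψ_c⟩ = √p|0⟩ + √(1−p)|1⟩, one has ∑_{ij} W_{ij}(ρ ⊗ ρ_c)W_{ij}† = (p|0⟩⟨0| + (1−p)|1⟩⟨1|) ⊗ I/d + √(p(1−p))(|0⟩⟨1| + |1⟩⟨0|) ⊗ ρ/d². -/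

import Mathlib

open Matrix Kronecker BigOperators
open scoped ComplexOrder

section aux
variable {d : ℕ} (U : Fin (d ^ 2) → Matrix (Fin d) (Fin d) ℂ)

lemma kron_conjT {m n p' q : Type*} (A : Matrix m n ℂ) (B : Matrix p' q ℂ) :
    (A ⊗ₖ B)ᴴ = Aᴴ ⊗ₖ Bᴴ := by
  ext ⟨i,j⟩ ⟨k,l⟩
  simp [conjTranspose_apply, kroneckerMap_apply, star_mul']

lemma completeness (hd : 1 ≤ d)
    (hortho : ∀ i j, ((U i)ᴴ * (U j)).trace = if i = j then (d : ℂ) else 0)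
    (a c b e : Fin d) :
    ∑ i, U i a c * (starRingEnd ℂ) (U i b e) = if a = b ∧ c = e then (d : ℂ) else 0 := by
  classical
  have hdc : (d : ℂ) ≠ 0 := Nat.cast_ne_zero.mpr (by omega)
  let eqv : Fin (d ^ 2) ≃ Fin d × Fin d :=
    finCongr (by ring : d ^ 2 = d * d) |>.trans finProdFinEquiv.symm
  let M : Matrix (Fin (d ^ 2)) (Fin d × Fin d) ℂ :=
    Matrix.of fun i k => U i k.1 k.2
  have h1 : M * Mᴴ = (d : ℂ) • 1 := by
    ext i j
    have key : (M * Mᴴ) i j = ((U j)ᴴ * U i).trace := by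
      rw [Matrix.mul_apply, ← Finset.univ_product_univ, Finset.sum_product, Matrix.trace]
      simp only [Matrix.diag, Matrix.mul_apply, Matrix.conjTranspose_apply, M, Matrix.of_apply]
      rw [Finset.sum_comm]
      exact Finset.sum_congr rfl fun x _ => Finset.sum_congr rfl fun y _ => mul_comm _ _
    rw [key, hortho j i]
    by_cases h : i = j <;> simp [Matrix.one_apply, h, eq_comm]
  have h2 : Mᴴ * M = (d : ℂ) • 1 := by
    have h1' : M * ((d : ℂ)⁻¹ • Mᴴ) = 1 := by
      rw [Matrix.mul_smul, h1, smul_smul, inv_mul_cancel₀ hdc, one_smul]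
    have h3 := (mul_eq_one_comm_of_equiv eqv).mp h1'
    rw [Matrix.smul_mul] at h3
    calc Mᴴ * M = (d : ℂ) • ((d : ℂ)⁻¹ • (Mᴴ * M)) := by
          rw [smul_smul, mul_inv_cancel₀ hdc, one_smul]
      _ = (d : ℂ) • 1 := by rw [h3]
  have h4 := congrFun (congrFun h2 (b, e)) (a, c)
  rw [Matrix.mul_apply] at h4
  simp only [Matrix.conjTranspose_apply, M, Matrix.of_apply, Matrix.smul_apply, one_apply,
    Prod.mk.injEq, smul_ite, smul_zero, smul_eq_mul, mul_one] at h4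
  calc ∑ i, U i a c * (starRingEnd ℂ) (U i b e)
      = ∑ i, star (U i (b, e).1 (b, e).2) * U i (a, c).1 (a, c).2 := by
        exact Finset.sum_congr rfl fun i _ => mul_comm _ _
    _ = (d : ℂ) * if b = a ∧ e = c then 1 else 0 := h4
    _ = if b = a ∧ e = c then (d : ℂ) else 0 := by split <;> ring
    _ = if a = b ∧ c = e then (d : ℂ) else 0 := by
        by_cases h : a = b ∧ c = e
        · simp [h.1, h.2]
        · rw [if_neg h, if_neg (by tauto)]

end aux

section aux2
variable {d : ℕ} (U : Fin (d ^ 2) → Matrix (Fin d) (Fin d) ℂ)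

lemma sumUMU
    (hc : ∀ a c b e, ∑ i, U i a c * (starRingEnd ℂ) (U i b e)
        = if a = b ∧ c = e then (d : ℂ) else 0)
    (M : Matrix (Fin d) (Fin d) ℂ) :
    ∑ i, U i * M * (U i)ᴴ = ((d : ℂ) * M.trace) • 1 := by
  ext a b
  have key : (∑ i, U i * M * (U i)ᴴ) a b
      = ∑ c, ∑ e, M e c * ∑ i, U i a e * (starRingEnd ℂ) (U i b c) := by
    rw [Matrix.sum_apply]
    simp only [Matrix.mul_apply, Matrix.conjTranspose_apply, Finset.sum_mul]
    rw [Finset.sum_comm]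
    refine Finset.sum_congr rfl fun c _ => ?_
    rw [Finset.sum_comm]
    refine Finset.sum_congr rfl fun e _ => ?_
    rw [Finset.mul_sum]
    refine Finset.sum_congr rfl fun i _ => ?_
    simp only [starRingEnd_apply]
    ring
  rw [key]
  simp only [hc, mul_ite, mul_zero]
  by_cases h : a = b
  · subst h
    simp only [true_and, Matrix.smul_apply, Matrix.one_apply_eq, smul_eq_mul, mul_one]
    rw [Matrix.trace, Finset.mul_sum]
    rw [show (∑ c, ∑ e, if e = c then M e c * (d:ℂ) else 0) = ∑ c, M c c * (d:ℂ) by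
      refine Finset.sum_congr rfl fun c _ => ?_
      simp]
    refine Finset.sum_congr rfl fun c _ => ?_
    simp [Matrix.diag]
    ring
  · simp [h, Matrix.one_apply, fun hh => h hh]
lemma sumTrU
    (hc : ∀ a c b e, ∑ i, U i a c * (starRingEnd ℂ) (U i b e)
        = if a = b ∧ c = e then (d : ℂ) else 0)
    (M : Matrix (Fin d) (Fin d) ℂ) :
    ∑ j, (U j * M).trace • (U j)ᴴ = (d : ℂ) • M := by
  ext a b
  have key : (∑ j, (U j * M).trace • (U j)ᴴ) a b
      = ∑ c, ∑ e, M e c * ∑ j, U j c e * (starRingEnd ℂ) (U j b a) := by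
    rw [Matrix.sum_apply]
    simp only [Matrix.smul_apply, Matrix.conjTranspose_apply, Matrix.trace, Matrix.diag,
      Matrix.mul_apply, smul_eq_mul, Finset.sum_mul]
    rw [Finset.sum_comm]
    refine Finset.sum_congr rfl fun c _ => ?_
    rw [Finset.sum_comm]
    refine Finset.sum_congr rfl fun e _ => ?_
    rw [Finset.mul_sum]
    refine Finset.sum_congr rfl fun j _ => ?_
    simp only [starRingEnd_apply]
    ring
  rw [key]
  simp only [hc, mul_ite, mul_zero, Matrix.smul_apply, smul_eq_mul]
  rw [show (∑ c, ∑ e, if c = b ∧ e = a then M e c * (d:ℂ) else 0)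
      = ∑ c, if c = b then M a c * (d:ℂ) else 0 by
    refine Finset.sum_congr rfl fun c _ => ?_
    by_cases h : c = b <;> simp [h]]
  simp [mul_comm]

end aux2

section aux3
variable {d : ℕ} (U : Fin (d ^ 2) → Matrix (Fin d) (Fin d) ℂ)

lemma sum_kron {n m p' q ι : Type*} (s : Finset ι)
    (A : ι → Matrix n m ℂ) (B : Matrix p' q ℂ) :
    (∑ i ∈ s, A i) ⊗ₖ B = ∑ i ∈ s, (A i ⊗ₖ B) := by
  ext ⟨i, j⟩ ⟨k, l⟩
  simp [kroneckerMap_apply, Matrix.sum_apply, Finset.sum_mul]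

lemma stdB_conjT (i j : Fin 2) :
    (Matrix.single i j (1 : ℂ))ᴴ = Matrix.single j i (1 : ℂ) := by
  ext a b
  simp only [conjTranspose_apply, Matrix.single, Matrix.of_apply]
  by_cases h : a = j ∧ b = i
  · simp [h.1, h.2]
  · rw [if_neg (by tauto), if_neg (by tauto)]
    simp

lemma S1lem
    (hc : ∀ a c b e, ∑ i, U i a c * (starRingEnd ℂ) (U i b e)
        = if a = b ∧ c = e then (d : ℂ) else 0)
    (hUi : ∀ i, U i * (U i)ᴴ = 1)
    (ρ : Matrix (Fin d) (Fin d) ℂ) (htr : ρ.trace = 1) :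
    ∑ i, ∑ j, (U i * U j) * ρ * (U i * U j)ᴴ = ((d : ℂ) ^ 3) • 1 := by
  have h1 : ∀ i : Fin (d ^ 2), ∑ j, (U i * U j) * ρ * (U i * U j)ᴴ
      = (d : ℂ) • (1 : Matrix (Fin d) (Fin d) ℂ) := by
    intro i
    have e1 : ∀ j, (U i * U j) * ρ * (U i * U j)ᴴ = U i * (U j * ρ * (U j)ᴴ) * (U i)ᴴ := by
      intro j; rw [Matrix.conjTranspose_mul]; simp only [Matrix.mul_assoc]
    simp_rw [e1]
    rw [← Finset.sum_mul, ← Finset.mul_sum, sumUMU U hc ρ, htr, mul_one]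
    rw [Matrix.mul_smul, Matrix.smul_mul, Matrix.mul_one, hUi i]
  simp_rw [h1]
  rw [Finset.sum_const, Finset.card_univ, Fintype.card_fin,
    ← Nat.cast_smul_eq_nsmul ℂ, smul_smul]
  congr 1
  push_cast
  ring

lemma S2lem
    (hc : ∀ a c b e, ∑ i, U i a c * (starRingEnd ℂ) (U i b e)
        = if a = b ∧ c = e then (d : ℂ) else 0)
    (ρ : Matrix (Fin d) (Fin d) ℂ) :
    ∑ i, ∑ j, (U i * U j) * ρ * (U j * U i)ᴴ = ((d : ℂ) ^ 2) • ρ := by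
  rw [Finset.sum_comm]
  have h1 : ∀ j : Fin (d ^ 2), ∑ i, (U i * U j) * ρ * (U j * U i)ᴴ
      = (d : ℂ) • ((U j * ρ).trace • (U j)ᴴ) := by
    intro j
    have e1 : ∀ i, (U i * U j) * ρ * (U j * U i)ᴴ
        = (U i * (U j * ρ) * (U i)ᴴ) * (U j)ᴴ := by
      intro i; rw [Matrix.conjTranspose_mul]; simp only [Matrix.mul_assoc]
    simp_rw [e1]
    rw [← Finset.sum_mul, sumUMU U hc (U j * ρ), Matrix.smul_mul, Matrix.one_mul,
      mul_smul]
  simp_rw [h1]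
  rw [← Finset.smul_sum, sumTrU U hc ρ, smul_smul]
  congr 1
  ring

lemma S2lem'
    (hc : ∀ a c b e, ∑ i, U i a c * (starRingEnd ℂ) (U i b e)
        = if a = b ∧ c = e then (d : ℂ) else 0)
    (ρ : Matrix (Fin d) (Fin d) ℂ) :
    ∑ i, ∑ j, (U j * U i) * ρ * (U i * U j)ᴴ = ((d : ℂ) ^ 2) • ρ := by
  rw [Finset.sum_comm]
  exact S2lem U hc ρ

end aux3

section sandwichsec

lemma sand00 (p q s : ℂ) :
    Matrix.single (0 : Fin 2) (0 : Fin 2) (1 : ℂ)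
        * (p • Matrix.single (0 : Fin 2) (0 : Fin 2) (1 : ℂ)
            + q • Matrix.single (1 : Fin 2) (1 : Fin 2) (1 : ℂ)
            + s • (Matrix.single (0 : Fin 2) (1 : Fin 2) (1 : ℂ)
                + Matrix.single (1 : Fin 2) (0 : Fin 2) (1 : ℂ)))
        * Matrix.single (0 : Fin 2) (0 : Fin 2) (1 : ℂ)
      = p • Matrix.single (0 : Fin 2) (0 : Fin 2) (1 : ℂ) := by
  ext i j
  fin_cases i <;> fin_cases j <;>
    simp [Matrix.mul_apply, Fin.sum_univ_two, Matrix.single]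

lemma sand01 (p q s : ℂ) :
    Matrix.single (0 : Fin 2) (0 : Fin 2) (1 : ℂ)
        * (p • Matrix.single (0 : Fin 2) (0 : Fin 2) (1 : ℂ)
            + q • Matrix.single (1 : Fin 2) (1 : Fin 2) (1 : ℂ)
            + s • (Matrix.single (0 : Fin 2) (1 : Fin 2) (1 : ℂ)
                + Matrix.single (1 : Fin 2) (0 : Fin 2) (1 : ℂ)))
        * Matrix.single (1 : Fin 2) (1 : Fin 2) (1 : ℂ)
      = s • Matrix.single (0 : Fin 2) (1 : Fin 2) (1 : ℂ) := by
  ext i j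
  fin_cases i <;> fin_cases j <;>
    simp [Matrix.mul_apply, Fin.sum_univ_two, Matrix.single]

lemma sand10 (p q s : ℂ) :
    Matrix.single (1 : Fin 2) (1 : Fin 2) (1 : ℂ)
        * (p • Matrix.single (0 : Fin 2) (0 : Fin 2) (1 : ℂ)
            + q • Matrix.single (1 : Fin 2) (1 : Fin 2) (1 : ℂ)
            + s • (Matrix.single (0 : Fin 2) (1 : Fin 2) (1 : ℂ)
                + Matrix.single (1 : Fin 2) (0 : Fin 2) (1 : ℂ)))
        * Matrix.single (0 : Fin 2) (0 : Fin 2) (1 : ℂ)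
      = s • Matrix.single (1 : Fin 2) (0 : Fin 2) (1 : ℂ) := by
  ext i j
  fin_cases i <;> fin_cases j <;>
    simp [Matrix.mul_apply, Fin.sum_univ_two, Matrix.single]

lemma sand11 (p q s : ℂ) :
    Matrix.single (1 : Fin 2) (1 : Fin 2) (1 : ℂ)
        * (p • Matrix.single (0 : Fin 2) (0 : Fin 2) (1 : ℂ)
            + q • Matrix.single (1 : Fin 2) (1 : Fin 2) (1 : ℂ)
            + s • (Matrix.single (0 : Fin 2) (1 : Fin 2) (1 : ℂ)
                + Matrix.single (1 : Fin 2) (0 : Fin 2) (1 : ℂ)))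
        * Matrix.single (1 : Fin 2) (1 : Fin 2) (1 : ℂ)
      = q • Matrix.single (1 : Fin 2) (1 : Fin 2) (1 : ℂ) := by
  ext i j
  fin_cases i <;> fin_cases j <;>
    simp [Matrix.mul_apply, Fin.sum_univ_two, Matrix.single]

lemma sandwich {d : ℕ} (A B ρ : Matrix (Fin d) (Fin d) ℂ) (p q s : ℂ) :
    (A ⊗ₖ Matrix.single (0 : Fin 2) (0 : Fin 2) (1 : ℂ)
        + B ⊗ₖ Matrix.single (1 : Fin 2) (1 : Fin 2) (1 : ℂ))
      * (ρ ⊗ₖ (p • Matrix.single (0 : Fin 2) (0 : Fin 2) (1 : ℂ)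
            + q • Matrix.single (1 : Fin 2) (1 : Fin 2) (1 : ℂ)
            + s • (Matrix.single (0 : Fin 2) (1 : Fin 2) (1 : ℂ)
                + Matrix.single (1 : Fin 2) (0 : Fin 2) (1 : ℂ))))
      * (A ⊗ₖ Matrix.single (0 : Fin 2) (0 : Fin 2) (1 : ℂ)
        + B ⊗ₖ Matrix.single (1 : Fin 2) (1 : Fin 2) (1 : ℂ))ᴴ
    = p • ((A * ρ * Aᴴ) ⊗ₖ Matrix.single (0 : Fin 2) (0 : Fin 2) (1 : ℂ))
      + s • ((A * ρ * Bᴴ) ⊗ₖ Matrix.single (0 : Fin 2) (1 : Fin 2) (1 : ℂ))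
      + s • ((B * ρ * Aᴴ) ⊗ₖ Matrix.single (1 : Fin 2) (0 : Fin 2) (1 : ℂ))
      + q • ((B * ρ * Bᴴ) ⊗ₖ Matrix.single (1 : Fin 2) (1 : Fin 2) (1 : ℂ)) := by
  rw [Matrix.conjTranspose_add, kron_conjT, kron_conjT, stdB_conjT, stdB_conjT]
  simp only [Matrix.add_mul, Matrix.mul_add, ← Matrix.mul_kronecker_mul, Matrix.mul_smul,
    Matrix.smul_mul, Matrix.single_mul_single_same, one_mul, mul_one,
    Matrix.single_mul_single_of_ne, ne_eq, Fin.one_eq_zero_iff, Fin.zero_eq_one_iff,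
    OfNat.ofNat_ne_one, not_false_eq_true,
    mul_zero, zero_mul, smul_zero, add_zero, zero_add,
    Matrix.kronecker_smul, Matrix.kronecker_add, Matrix.kronecker_zero]
  abel

end sandwichsec

theorem switch_of_two_depolarizing (d : ℕ) (hd : 1 ≤ d)
    (U : Fin (d ^ 2) → Matrix (Fin d) (Fin d) ℂ)
    (hU : ∀ i, (U i)ᴴ * U i = 1)
    (hortho : ∀ i j, ((U i)ᴴ * (U j)).trace = if i = j then (d : ℂ) else 0)
    (ρ : Matrix (Fin d) (Fin d) ℂ) (hρ : ρ.PosSemidef) (htr : ρ.trace = 1)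
    (p : ℝ) (hp0 : 0 ≤ p) (hp1 : p ≤ 1) :
    ∑ i : Fin (d ^ 2), ∑ j : Fin (d ^ 2),
      (((d : ℂ) ^ 2)⁻¹ • ((U i * U j) ⊗ₖ Matrix.single (0 : Fin 2) 0 (1 : ℂ)
          + (U j * U i) ⊗ₖ Matrix.single (1 : Fin 2) 1 (1 : ℂ)))
        * (ρ ⊗ₖ ((p : ℂ) • Matrix.single (0 : Fin 2) 0 (1 : ℂ)
            + ((1 - p : ℝ) : ℂ) • Matrix.single (1 : Fin 2) 1 (1 : ℂ)
            + ((Real.sqrt (p * (1 - p)) : ℝ) : ℂ) •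
                (Matrix.single (0 : Fin 2) 1 (1 : ℂ)
                  + Matrix.single (1 : Fin 2) 0 (1 : ℂ))))
        * (((d : ℂ) ^ 2)⁻¹ • ((U i * U j) ⊗ₖ Matrix.single (0 : Fin 2) 0 (1 : ℂ)
          + (U j * U i) ⊗ₖ Matrix.single (1 : Fin 2) 1 (1 : ℂ)))ᴴ
    = ((d : ℂ)⁻¹ • (1 : Matrix (Fin d) (Fin d) ℂ)) ⊗ₖ
        ((p : ℂ) • Matrix.single (0 : Fin 2) 0 (1 : ℂ)
          + ((1 - p : ℝ) : ℂ) • Matrix.single (1 : Fin 2) 1 (1 : ℂ))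
      + (((d : ℂ) ^ 2)⁻¹ • ρ) ⊗ₖ
          (((Real.sqrt (p * (1 - p)) : ℝ) : ℂ) •
            (Matrix.single (0 : Fin 2) 1 (1 : ℂ)
              + Matrix.single (1 : Fin 2) 0 (1 : ℂ))) := by
  classical
  have hdc : (d : ℂ) ≠ 0 := Nat.cast_ne_zero.mpr (by omega)
  have hc := completeness U hd hortho
  have hUi : ∀ i, U i * (U i)ᴴ = 1 := fun i => mul_eq_one_comm.mp (hU i)
  have hstar : star (((d : ℂ) ^ 2)⁻¹) = ((d : ℂ) ^ 2)⁻¹ := by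
    rw [star_inv₀, star_pow]
    norm_cast
  have hterm : ∀ i j : Fin (d ^ 2),
      (((d : ℂ) ^ 2)⁻¹ • ((U i * U j) ⊗ₖ Matrix.single (0 : Fin 2) (0 : Fin 2) (1 : ℂ)
          + (U j * U i) ⊗ₖ Matrix.single (1 : Fin 2) (1 : Fin 2) (1 : ℂ)))
        * (ρ ⊗ₖ ((p : ℂ) • Matrix.single (0 : Fin 2) (0 : Fin 2) (1 : ℂ)
            + ((1 - p : ℝ) : ℂ) • Matrix.single (1 : Fin 2) (1 : Fin 2) (1 : ℂ)
            + ((Real.sqrt (p * (1 - p)) : ℝ) : ℂ) •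
                (Matrix.single (0 : Fin 2) (1 : Fin 2) (1 : ℂ)
                  + Matrix.single (1 : Fin 2) (0 : Fin 2) (1 : ℂ))))
        * (((d : ℂ) ^ 2)⁻¹ • ((U i * U j) ⊗ₖ Matrix.single (0 : Fin 2) (0 : Fin 2) (1 : ℂ)
          + (U j * U i) ⊗ₖ Matrix.single (1 : Fin 2) (1 : Fin 2) (1 : ℂ)))ᴴ
      = (((d : ℂ) ^ 2)⁻¹ * ((d : ℂ) ^ 2)⁻¹) •
          ((p : ℂ) • (((U i * U j) * ρ * (U i * U j)ᴴ) ⊗ₖ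
              Matrix.single (0 : Fin 2) (0 : Fin 2) (1 : ℂ))
            + ((Real.sqrt (p * (1 - p)) : ℝ) : ℂ) • (((U i * U j) * ρ * (U j * U i)ᴴ) ⊗ₖ
                Matrix.single (0 : Fin 2) (1 : Fin 2) (1 : ℂ))
            + ((Real.sqrt (p * (1 - p)) : ℝ) : ℂ) • (((U j * U i) * ρ * (U i * U j)ᴴ) ⊗ₖ
                Matrix.single (1 : Fin 2) (0 : Fin 2) (1 : ℂ))
            + ((1 - p : ℝ) : ℂ) • (((U j * U i) * ρ * (U j * U i)ᴴ) ⊗ₖ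
                Matrix.single (1 : Fin 2) (1 : Fin 2) (1 : ℂ))) := by
    intro i j
    rw [Matrix.conjTranspose_smul, hstar, Matrix.smul_mul, Matrix.smul_mul,
      Matrix.mul_smul, smul_smul]
    congr 1
    exact sandwich (U i * U j) (U j * U i) ρ _ _ _
  simp only [hterm]
  simp only [← Finset.smul_sum, Finset.sum_add_distrib, ← sum_kron]
  rw [S1lem U hc hUi ρ htr, S2lem U hc ρ, S2lem' U hc ρ]
  rw [show (∑ i : Fin (d ^ 2), ∑ j : Fin (d ^ 2), (U j * U i) * ρ * (U j * U i)ᴴ)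
      = ((d : ℂ) ^ 3) • 1 from Finset.sum_comm.trans (S1lem U hc hUi ρ htr)]
  simp only [Matrix.smul_kronecker, Matrix.kronecker_add, Matrix.kronecker_smul]
  match_scalars <;> field_simp <;> ring
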